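/- For all integers j ≥ 2, ω_j := P(Po(j) < j-1) = e^{-j} ∑_{i=0}^{j-2} j^i/i! satisfies 0 < ω_j ≤ 1/2; consequently the rejection sampler with θ = 1/2 has acceptance probabilities (ω_j/θ)^{a_j} ∈ (0,1]. -/

import Mathlib

open Finset

lemma aux_rec (j m : ℕ) : (j : ℝ) ^ (m+1) / ((m+1).factorial : ℝ) =
    ((j : ℝ) ^ m / (m.factorial : ℝ)) * (j / (m+1)) := by
  rw [Nat.factorial_succ]
  push_cast
  have h1 : (m.factorial : ℝ) ≠ 0 := Nat.cast_ne_zero.mpr m.factorial_ne_zero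
  have h2 : (m : ℝ) + 1 ≠ 0 := by positivity
  field_simp
  ring

lemma aux_key (n : ℕ) : ∀ k ≤ n, ((n:ℝ)+2) ^ (n - k) / ((n-k).factorial : ℝ)
    ≤ ((n:ℝ)+2) ^ (n+1+k) / ((n+1+k).factorial : ℝ) := by
  set j := n + 2 with hjdef
  have hjc : ((n:ℝ)+2) = (j : ℝ) := by push_cast [hjdef]; ring
  rw [hjc]
  set a : ℕ → ℝ := fun m => (j : ℝ) ^ m / (m.factorial : ℝ) with ha
  have hnonneg : ∀ m, 0 ≤ a m := fun m => by positivity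
  have hrec : ∀ m, a (m+1) = a m * (j / (m+1)) := fun m => aux_rec j m
  intro k
  induction k with
  | zero =>
    intro _
    simp only [Nat.sub_zero, Nat.add_zero]
    show a n ≤ a (n + 1)
    rw [hrec n]
    have h1 : (1:ℝ) ≤ (j : ℝ) / (n+1) := by
      rw [le_div_iff₀ (by positivity)]
      have : (n:ℝ) + 1 ≤ j := by push_cast [hjdef]; linarith
      linarith
    nlinarith [hnonneg n]
  | succ k ih =>
    intro hk
    have hk' : k ≤ n := le_of_lt (Nat.lt_of_succ_le hk)
    have hsub : n - k = (n - (k+1)) + 1 := by omega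
    have hcast : ((n - (k+1) : ℕ) : ℝ) = (n : ℝ) - (k+1) := by
      have h : (k:ℕ)+1 ≤ n := hk
      push_cast [Nat.cast_sub h]
      ring
    have hjpos : (0:ℝ) < j := by positivity
    have hjne : (j:ℝ) ≠ 0 := ne_of_gt hjpos
    have hkn : ((k:ℝ)+1) ≤ n := by exact_mod_cast hk
    have e1 : a (n - k) = a (n - (k+1)) * (j / ((n:ℝ) - (k+1) + 1)) := by
      rw [hsub, hrec, hcast]
    have e2 : a (n + 1 + (k+1)) = a (n+1+k) * (j / ((n:ℝ)+1+k+1)) := by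
      rw [show n + 1 + (k+1) = (n+1+k) + 1 by ring, hrec]
      congr 2
      push_cast
      ring
    have hd : (n:ℝ) - (k+1) + 1 ≠ 0 := by
      intro h; nlinarith
    have e1' : a (n - (k+1)) = a (n - k) * (((n:ℝ) - (k+1) + 1) / j) := by
      rw [e1]
      field_simp
    have hstep : ((n:ℝ) - (k+1) + 1) / j ≤ (j:ℝ) / ((n:ℝ)+1+k+1) := by
      rw [div_le_div_iff₀ hjpos (by positivity)]
      have hj2 : ((j:ℝ)) = (n:ℝ) + 2 := by push_cast [hjdef]; ring
      rw [hj2]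
      nlinarith [sq_nonneg ((k:ℝ)+1)]
    have h0 : (0:ℝ) ≤ ((n:ℝ) - (k+1) + 1) / j := div_nonneg (by linarith) (le_of_lt hjpos)
    show a (n - (k+1)) ≤ a (n + 1 + (k+1))
    rw [e1', e2]
    calc a (n - k) * (((n:ℝ) - (k+1) + 1) / j)
        ≤ a (n+1+k) * (((n:ℝ) - (k+1) + 1) / j) :=
          mul_le_mul_of_nonneg_right (ih hk') h0
      _ ≤ a (n+1+k) * ((j:ℝ) / ((n:ℝ)+1+k+1)) :=
          mul_le_mul_of_nonneg_left hstep (hnonneg _)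

theorem stmt_17 (j : ℕ) (hj : 2 ≤ j) :
    0 < Real.exp (-(j : ℝ)) * ∑ i ∈ Finset.range (j - 1), (j : ℝ) ^ i / (i.factorial : ℝ) ∧
    Real.exp (-(j : ℝ)) * ∑ i ∈ Finset.range (j - 1), (j : ℝ) ^ i / (i.factorial : ℝ) ≤ 1 / 2 := by
  obtain ⟨n, rfl⟩ : ∃ n, j = n + 2 := ⟨j - 2, by omega⟩
  have hsimp : n + 2 - 1 = n + 1 := by omega
  rw [hsimp]
  set a : ℕ → ℝ := fun m => ((n:ℝ)+2) ^ m / (m.factorial : ℝ) with ha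
  have hcast : ((n+2 : ℕ) : ℝ) = ((n:ℝ)+2) := by push_cast; ring
  have hS : ∑ i ∈ Finset.range (n+1), ((n+2:ℕ) : ℝ) ^ i / (i.factorial : ℝ)
      = ∑ i ∈ Finset.range (n+1), a i := by
    apply Finset.sum_congr rfl
    intro i _
    rw [ha, hcast]
  constructor
  · apply mul_pos (Real.exp_pos _)
    refine Finset.sum_pos (fun i _ => by positivity) ⟨0, by simp⟩
  · have key : ∑ i ∈ Finset.range (n+1), a i ≤ Real.exp ((n:ℝ)+2) / 2 := by
      have hrefl : ∑ i ∈ Finset.range (n+1), a i = ∑ k ∈ Finset.range (n+1), a (n - k) := by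
        rw [← Finset.sum_range_reflect]
        apply Finset.sum_congr rfl
        intro k hk
        norm_num
      have hpair : ∑ k ∈ Finset.range (n+1), a (n - k)
          ≤ ∑ k ∈ Finset.range (n+1), a (n+1+k) := by
        apply Finset.sum_le_sum
        intro k hk
        have hkle : k ≤ n := Nat.lt_succ_iff.mp (Finset.mem_range.mp hk)
        exact aux_key n k hkle
      have hIco : ∑ k ∈ Finset.range (n+1), a (n+1+k)
          = ∑ i ∈ Finset.Ico (n+1) (2*n+2), a i := by
        rw [Finset.sum_Ico_eq_sum_range]
        have h2 : 2*n + 2 - (n+1) = n + 1 := by omega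
        rw [h2]
      have hsplit : ∑ i ∈ Finset.range (n+1), a i + ∑ i ∈ Finset.Ico (n+1) (2*n+2), a i
          = ∑ i ∈ Finset.range (2*n+2), a i := by
        rw [Finset.range_eq_Ico, Finset.range_eq_Ico]
        exact Finset.sum_Ico_consecutive a (m := 0) (n := n+1) (k := 2*n+2) (by omega) (by omega)
      have hexp : ∑ i ∈ Finset.range (2*n+2), a i ≤ Real.exp ((n:ℝ)+2) := by
        exact Real.sum_le_exp_of_nonneg (by positivity) (2*n+2)
      linarith [hIco ▸ hpair]
    rw [hS]
    have hE : Real.exp (-(((n+2:ℕ)):ℝ)) = (Real.exp ((n:ℝ)+2))⁻¹ := by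
      rw [Real.exp_neg, hcast]
    rw [hE, inv_mul_le_iff₀ (Real.exp_pos _)]
    linarith [key]
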